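/- Let G and Γ be countable groups with essentially free ergodic measure-preserving actions on standard probability spaces (X,μ) and (Y,η) respectively. If π₁ : A₁ → B₁ and π₂ : A₂ → B₂ are stable orbit equivalences between these actions that define the same stable orbit equivalence, then their compression constants agree: η(B₁)/μ(A₁) = η(B₂)/μ(A₂). -/

import Mathlib

open MeasureTheory

noncomputable section

/-- `π : A → B` is a stable orbit equivalence between the action `aX` of `G` on `(X,μ)` and
the action `aY` of `Γ` on `(Y,η)`: it is a measurable bijection modulo null sets, pushing
the normalized restricted measure on `A` forward to the one on `B`, and sending
`A ∩ G•x` onto `B ∩ Γ•π(x)` for a.e. `x ∈ A`. -/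
def IsStableOE {G Γ X Y : Type*} [Group G] [Group Γ] [MeasurableSpace X] [MeasurableSpace Y]
    (μ : Measure X) (η : Measure Y) (aX : G → X → X) (aY : Γ → Y → Y)
    (A : Set X) (B : Set Y) (π : X → Y) : Prop :=
  MeasurableSet A ∧ MeasurableSet B ∧ 0 < μ A ∧ 0 < η B ∧
  Measurable π ∧ (∀ᵐ x ∂μ.restrict A, π x ∈ B) ∧
  Measure.map π ((μ A)⁻¹ • μ.restrict A) = (η B)⁻¹ • η.restrict B ∧
  (∃ σ : Y → X, Measurable σ ∧ (∀ᵐ x ∂μ.restrict A, σ (π x) = x) ∧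
    (∀ᵐ y ∂η.restrict B, π (σ y) = y)) ∧
  (∀ᵐ x ∂μ.restrict A,
    π '' (A ∩ Set.range fun g : G => aX g x) = B ∩ Set.range fun s : Γ => aY s (π x))

/-- If a measurable map `f` moves every point of `S` within its orbit and is injective on `S`,
then it preserves the measure of `S`. -/
lemma orbit_image_measure {Γ Y : Type*} [Group Γ] [Countable Γ] [MeasurableSpace Y]
    (η : Measure Y) (aY : Γ → Y → Y) (hmeas : ∀ s, Measurable (aY s))
    (hmp : ∀ s, MeasurePreserving (aY s) η η)
    (hone : ∀ y, aY 1 y = y) (hmul : ∀ s t y, aY (s * t) y = aY s (aY t y))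
    {f : Y → Y} {S : Set Y} (hS : MeasurableSet S)
    (hmeq : ∀ s : Γ, MeasurableSet {y | f y = aY s y})
    (hinj : Set.InjOn f S) (horb : ∀ y ∈ S, ∃ s, f y = aY s y) :
    η (f '' S) = η S := by
  classical
  haveI : Encodable Γ := Encodable.ofCountable Γ
  set n : Γ → ℕ := Encodable.encode with hn
  have hinv1 : ∀ (s : Γ) y, aY s⁻¹ (aY s y) = y := fun s y => by
    rw [← hmul, inv_mul_cancel, hone]
  have hinv2 : ∀ (s : Γ) y, aY s (aY s⁻¹ y) = y := fun s y => by
    rw [← hmul, mul_inv_cancel, hone]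
  set P : Γ → Set Y := fun s =>
    S ∩ {y | f y = aY s y} ∩ ⋂ t, {y | f y = aY t y → n s ≤ n t} with hP
  have hPmeas : ∀ s, MeasurableSet (P s) := by
    intro s
    refine (hS.inter (hmeq s)).inter (MeasurableSet.iInter fun t => ?_)
    by_cases h : n s ≤ n t
    · have : {y | f y = aY t y → n s ≤ n t} = Set.univ := by
        ext y; simp [h]
      rw [this]; exact MeasurableSet.univ
    · have : {y | f y = aY t y → n s ≤ n t} = {y | f y = aY t y}ᶜ := by
        ext y; simp [h]
      rw [this]; exact (hmeq t).compl
  have hPsub : ∀ s, P s ⊆ S := fun s y hy => hy.1.1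
  have hPf : ∀ s, ∀ y ∈ P s, f y = aY s y := fun s y hy => hy.1.2
  have hcover : S = ⋃ s, P s := by
    apply Set.Subset.antisymm
    · intro y hy
      obtain ⟨s₀, hs₀⟩ := horb y hy
      set K : Set ℕ := {k | ∃ t : Γ, n t = k ∧ f y = aY t y} with hK
      have hKne : K.Nonempty := ⟨n s₀, s₀, rfl, hs₀⟩
      obtain ⟨t, htk, hty⟩ := Nat.sInf_mem hKne
      refine Set.mem_iUnion.2 ⟨t, ⟨hy, hty⟩, Set.mem_iInter.2 fun t' => fun h' => ?_⟩
      rw [htk]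
      exact Nat.sInf_le ⟨t', rfl, h'⟩
    · exact Set.iUnion_subset hPsub
  have hPdisj : Pairwise (Function.onFun Disjoint P) := by
    intro s t hst
    rw [Function.onFun, Set.disjoint_left]
    intro y hys hyt
    have h1 : n s ≤ n t := (Set.mem_iInter.1 hys.2) t hyt.1.2
    have h2 : n t ≤ n s := (Set.mem_iInter.1 hyt.2) s hys.1.2
    exact hst (Encodable.encode_injective (le_antisymm h1 h2))
  have himg : ∀ s, aY s '' P s = aY s⁻¹ ⁻¹' P s := by
    intro s; ext y
    constructor
    · rintro ⟨z, hz, rfl⟩; simpa [hinv1 s z] using hz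
    · intro hy; exact ⟨aY s⁻¹ y, hy, hinv2 s y⟩
  have himgmeas : ∀ s, MeasurableSet (aY s '' P s) := fun s =>
    (himg s) ▸ (hmeas s⁻¹ (hPmeas s))
  have hfS : f '' S = ⋃ s, aY s '' P s := by
    rw [hcover, Set.image_iUnion]
    exact Set.iUnion_congr fun s => Set.image_congr fun y hy => hPf s y hy
  have himgdisj : Pairwise (Function.onFun Disjoint fun s => aY s '' P s) := by
    intro s t hst
    rw [Function.onFun, Set.disjoint_left]
    rintro z ⟨y, hy, rfl⟩ ⟨y', hy', he⟩
    have h1 : f y = aY s y := hPf s y hy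
    have h2 : f y' = aY t y' := hPf t y' hy'
    have : f y = f y' := by rw [h1, h2, he]
    have hyy : y = y' := hinj (hPsub s hy) (hPsub t hy') this
    subst hyy
    exact Set.disjoint_left.1 (hPdisj hst) hy hy'
  calc η (f '' S) = η (⋃ s, aY s '' P s) := by rw [hfS]
    _ = ∑' s, η (aY s '' P s) := measure_iUnion himgdisj himgmeas
    _ = ∑' s, η (P s) := by
        refine tsum_congr fun s => ?_
        rw [himg s, (hmp s⁻¹).measure_preimage (hPmeas s).nullMeasurableSet]
    _ = η (⋃ s, P s) := (measure_iUnion hPdisj hPmeas).symm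
    _ = η S := by rw [← hcover]

/-- The scaling property of a stable orbit equivalence on nice subsets. -/
lemma soe_scaling {X Y : Type*} [MeasurableSpace X] [MeasurableSpace Y]
    (μ : Measure X) (η : Measure Y) {A : Set X} {B : Set Y} {π : X → Y} {σ : Y → X}
    (hπ : Measurable π) (hA : MeasurableSet A)
    (hmap : Measure.map π ((μ A)⁻¹ • μ.restrict A) = (η B)⁻¹ • η.restrict B)
    (hη0 : η B ≠ 0) (hηt : η B ≠ ⊤)
    {A' : Set X} (hA'sub : A' ⊆ A) (hA'null : μ (A \ A') = 0)
    (hσ : ∀ x ∈ A', σ (π x) = x) (hB' : ∀ x ∈ A', π x ∈ B)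
    {E : Set X} (hE : MeasurableSet E) (hEsub : E ⊆ A')
    (hC : MeasurableSet (π '' E)) :
    η (π '' E) = η B * (μ A)⁻¹ * μ E := by
  have hCB : π '' E ⊆ B := by rintro y ⟨x, hx, rfl⟩; exact hB' x (hEsub hx)
  have key := congrArg (fun m : Measure Y => m (π '' E)) hmap
  simp only [Measure.smul_apply, smul_eq_mul] at key
  rw [Measure.map_smul, Measure.smul_apply, smul_eq_mul,
    Measure.map_apply hπ hC, Measure.restrict_apply (hπ hC),
    Measure.restrict_apply hC, Set.inter_eq_self_of_subset_left hCB] at key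
  have hpre : μ (π ⁻¹' (π '' E) ∩ A) = μ E := by
    apply le_antisymm
    · have hsub : π ⁻¹' (π '' E) ∩ A ⊆ E ∪ (A \ A') := by
        rintro x ⟨hxC, hxA⟩
        by_cases hxA' : x ∈ A'
        · obtain ⟨e, he, hee⟩ := hxC
          have : x = e := by
            rw [← hσ x hxA', ← hσ e (hEsub he), hee]
          exact Or.inl (this ▸ he)
        · exact Or.inr ⟨hxA, hxA'⟩
      calc μ (π ⁻¹' (π '' E) ∩ A) ≤ μ (E ∪ (A \ A')) := measure_mono hsub
        _ ≤ μ E + μ (A \ A') := measure_union_le _ _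
        _ = μ E := by rw [hA'null, add_zero]
    · exact measure_mono fun x hx => ⟨Set.mem_preimage.2 ⟨x, hx, rfl⟩, hA'sub (hEsub hx)⟩
  rw [hpre] at key
  calc η (π '' E) = (η B * (η B)⁻¹) * η (π '' E) := by
        rw [ENNReal.mul_inv_cancel hη0 hηt, one_mul]
    _ = η B * ((η B)⁻¹ * η (π '' E)) := by ring
    _ = η B * ((μ A)⁻¹ * μ E) := by rw [← key]
    _ = η B * (μ A)⁻¹ * μ E := by ring


/-- Extract a measurable full-measure subset on which an a.e. property holds pointwise. -/
lemma good_subset {X : Type*} [MeasurableSpace X] (μ : Measure X) {A : Set X}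
    (hA : MeasurableSet A) {P : X → Prop} (h : ∀ᵐ x ∂μ.restrict A, P x) :
    ∃ A' : Set X, MeasurableSet A' ∧ A' ⊆ A ∧ μ (A \ A') = 0 ∧ μ A' = μ A ∧
      ∀ x ∈ A', P x := by
  have h0 : μ.restrict A {x | ¬ P x} = 0 := ae_iff.mp h
  rw [Measure.restrict_apply' hA] at h0
  set M := toMeasurable μ ({x | ¬ P x} ∩ A) with hM
  have hMnull : μ M = 0 := by rw [hM, measure_toMeasurable]; exact h0
  refine ⟨A \ M, hA.diff (measurableSet_toMeasurable _ _), Set.diff_subset, ?_,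
    measure_diff_null hMnull, ?_⟩
  · refine measure_mono_null (fun x hx => ?_) hMnull
    rcases hx with ⟨hxA, hxn⟩
    by_contra hxM
    exact hxn ⟨hxA, hxM⟩
  · intro x hx
    by_contra hc
    exact hx.2 (subset_toMeasurable μ _ ⟨hc, hx.1⟩)

/-- **Stable orbit equivalences defining the same equivalence have equal compression
constants.** -/
theorem same_SOE_equal_compression
    {G Γ : Type} [Group G] [Countable G] [Group Γ] [Countable Γ]
    {X Y : Type} [MeasurableSpace X] [StandardBorelSpace X]
    [MeasurableSpace Y] [StandardBorelSpace Y]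
    (μ : Measure X) [IsProbabilityMeasure μ] (η : Measure Y) [IsProbabilityMeasure η]
    (aX : G → X → X) (aY : Γ → Y → Y)
    (hXmeas : ∀ g, Measurable (aX g)) (hXmp : ∀ g, MeasurePreserving (aX g) μ μ)
    (hXone : ∀ x, aX 1 x = x) (hXmul : ∀ g h x, aX (g * h) x = aX g (aX h x))
    (hXfree : ∀ g : G, g ≠ 1 → μ {x | aX g x = x} = 0)
    (hXerg : ∀ S : Set X, MeasurableSet S →
      (∀ g : G, μ (symmDiff S (aX g ⁻¹' S)) = 0) → μ S = 0 ∨ μ Sᶜ = 0)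
    (hYmeas : ∀ s, Measurable (aY s)) (hYmp : ∀ s, MeasurePreserving (aY s) η η)
    (hYone : ∀ y, aY 1 y = y) (hYmul : ∀ s t y, aY (s * t) y = aY s (aY t y))
    (hYfree : ∀ s : Γ, s ≠ 1 → η {y | aY s y = y} = 0)
    (hYerg : ∀ S : Set Y, MeasurableSet S →
      (∀ s : Γ, η (symmDiff S (aY s ⁻¹' S)) = 0) → η S = 0 ∨ η Sᶜ = 0)
    (A₁ A₂ : Set X) (B₁ B₂ : Set Y) (π₁ π₂ : X → Y)
    (h₁ : IsStableOE μ η aX aY A₁ B₁ π₁)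
    (h₂ : IsStableOE μ η aX aY A₂ B₂ π₂)
    (hsame : ∀ᵐ x ∂μ.restrict A₁,
      π₂ '' (A₂ ∩ Set.range fun g : G => aX g x) ⊆ Set.range fun s : Γ => aY s (π₁ x)) :
    η B₁ / μ A₁ = η B₂ / μ A₂ := by
  classical
  obtain ⟨hA₁m, hB₁m, hμA₁, hηB₁, hπ₁m, hπ₁B, hmap₁, ⟨σ₁, hσ₁m, hσπ₁, -⟩, -⟩ := h₁
  obtain ⟨hA₂m, hB₂m, hμA₂, hηB₂, hπ₂m, hπ₂B, hmap₂, ⟨σ₂, hσ₂m, hσπ₂, -⟩, -⟩ := h₂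
  have hXinv1 : ∀ (g : G) x, aX g⁻¹ (aX g x) = x := fun g x => by
    rw [← hXmul, inv_mul_cancel, hXone]
  have hXinv2 : ∀ (g : G) x, aX g (aX g⁻¹ x) = x := fun g x => by
    rw [← hXmul, mul_inv_cancel, hXone]
  -- good subsets
  obtain ⟨A₁', hA₁'m, hA₁'sub, hA₁'null, hμA₁', hA₁'good⟩ :=
    good_subset μ hA₁m (hπ₁B.and (hσπ₁.and hsame))
  obtain ⟨A₂', hA₂'m, hA₂'sub, hA₂'null, hμA₂', hA₂'good⟩ :=
    good_subset μ hA₂m (hπ₂B.and hσπ₂)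
  -- the saturation of A₂' is conull
  set W : Set X := ⋃ g : G, aX g ⁻¹' A₂' with hW
  have hWm : MeasurableSet W := MeasurableSet.iUnion fun g => hXmeas g hA₂'m
  have hWinv : ∀ g : G, aX g ⁻¹' W = W := by
    intro g
    ext x
    simp only [hW, Set.mem_preimage, Set.mem_iUnion]
    constructor
    · rintro ⟨h, hh⟩
      exact ⟨h * g, by rwa [hXmul]⟩
    · rintro ⟨k, hk⟩
      exact ⟨k * g⁻¹, by rwa [hXmul, hXinv1]⟩
  have hWconull : μ Wᶜ = 0 := by
    rcases hXerg W hWm (fun g => by rw [hWinv g, symmDiff_self, Set.bot_eq_empty]; exact measure_empty) with h | h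
    · exfalso
      have hsub : A₂' ⊆ W := fun x hx =>
        Set.mem_iUnion.2 ⟨1, by rwa [Set.mem_preimage, hXone]⟩
      have hmono : μ A₂' ≤ μ W := measure_mono hsub
      rw [h, hμA₂'] at hmono
      exact hμA₂.ne' (le_antisymm hmono zero_le)
    · exact h
  -- find a piece of A₁' mapped into A₂' by a single group element
  obtain ⟨g₀, hE0⟩ : ∃ g₀ : G, μ (A₁' ∩ aX g₀ ⁻¹' A₂') ≠ 0 := by
    by_contra hcon
    push_neg at hcon
    have hnull : μ (A₁' ∩ W) = 0 := by
      rw [hW, Set.inter_iUnion]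
      exact measure_iUnion_null fun g => hcon g
    have hle : μ A₁' ≤ μ (A₁' ∩ W) + μ (A₁' \ W) := measure_le_inter_add_diff μ A₁' W
    have hdiff : μ (A₁' \ W) = 0 :=
      measure_mono_null (fun x hx => hx.2) hWconull
    rw [hnull, hdiff, add_zero] at hle
    rw [hμA₁'] at hle
    exact hμA₁.ne' (le_antisymm hle zero_le)
  set E : Set X := A₁' ∩ aX g₀ ⁻¹' A₂' with hEdef
  have hEm : MeasurableSet E := hA₁'m.inter (hXmeas g₀ hA₂'m)
  have hEsub : E ⊆ A₁' := Set.inter_subset_left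
  have hEA₂' : ∀ x ∈ E, aX g₀ x ∈ A₂' := fun x hx => hx.2
  have hμEtop : μ E ≠ ⊤ := measure_ne_top μ E
  -- the image F in A₂'
  set F : Set X := aX g₀ '' E with hFdef
  have hFpre : F = aX g₀⁻¹ ⁻¹' E := by
    ext x
    constructor
    · rintro ⟨z, hz, rfl⟩; rwa [Set.mem_preimage, hXinv1]
    · intro hx; exact ⟨aX g₀⁻¹ x, hx, hXinv2 g₀ x⟩
  have hFm : MeasurableSet F := hFpre ▸ hXmeas g₀⁻¹ hEm
  have hμF : μ F = μ E := by
    rw [hFpre]; exact (hXmp g₀⁻¹).measure_preimage hEm.nullMeasurableSet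
  have hFsub : F ⊆ A₂' := by rintro x ⟨z, hz, rfl⟩; exact hEA₂' z hz
  -- injectivity and measurability of the images
  have hinjπ₁ : Set.InjOn π₁ E := by
    intro x hx x' hx' hxx
    rw [← (hA₁'good x (hEsub hx)).2.1, ← (hA₁'good x' (hEsub hx')).2.1, hxx]
  have hinjπ₂ : Set.InjOn π₂ F := by
    intro x hx x' hx' hxx
    rw [← (hA₂'good x (hFsub hx)).2, ← (hA₂'good x' (hFsub hx')).2, hxx]
  have hTm : MeasurableSet (π₁ '' E) := hEm.image_of_measurable_injOn hπ₁m hinjπ₁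
  have hπ₂Fm : MeasurableSet (π₂ '' F) := hFm.image_of_measurable_injOn hπ₂m hinjπ₂
  -- scaling properties
  have hs1 : η (π₁ '' E) = η B₁ * (μ A₁)⁻¹ * μ E :=
    soe_scaling μ η hπ₁m hA₁m hmap₁ hηB₁.ne' (measure_ne_top η B₁)
      hA₁'sub hA₁'null (fun x hx => (hA₁'good x hx).2.1) (fun x hx => (hA₁'good x hx).1)
      hEm hEsub hTm
  have hs2 : η (π₂ '' F) = η B₂ * (μ A₂)⁻¹ * μ F :=
    soe_scaling μ η hπ₂m hA₂m hmap₂ hηB₂.ne' (measure_ne_top η B₂)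
      hA₂'sub hA₂'null (fun x hx => (hA₂'good x hx).2) (fun x hx => (hA₂'good x hx).1)
      hFm hFsub hπ₂Fm
  -- the within-orbit comparison map on Y
  set f : Y → Y := fun y => π₂ (aX g₀ (σ₁ y)) with hf
  have hfm : Measurable f := hπ₂m.comp ((hXmeas g₀).comp hσ₁m)
  have hfT : ∀ x ∈ E, f (π₁ x) = π₂ (aX g₀ x) := by
    intro x hx
    rw [hf]
    simp only []
    rw [(hA₁'good x (hEsub hx)).2.1]
  have horb : ∀ y ∈ π₁ '' E, ∃ s, f y = aY s y := by
    rintro y ⟨x, hx, rfl⟩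
    have hmem : π₂ (aX g₀ x) ∈ π₂ '' (A₂ ∩ Set.range fun g : G => aX g x) :=
      ⟨aX g₀ x, ⟨hA₂'sub (hEA₂' x hx), ⟨g₀, rfl⟩⟩, rfl⟩
    obtain ⟨s, hs⟩ := (hA₁'good x (hEsub hx)).2.2 hmem
    exact ⟨s, by rw [hfT x hx, ← hs]⟩
  have hinjf : Set.InjOn f (π₁ '' E) := by
    rintro y ⟨x, hx, rfl⟩ y' ⟨x', hx', rfl⟩ he
    rw [hfT x hx, hfT x' hx'] at he
    have h1 : aX g₀ x = aX g₀ x' := by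
      rw [← (hA₂'good _ (hEA₂' x hx)).2, ← (hA₂'good _ (hEA₂' x' hx')).2, he]
    have h2 : x = x' := by
      have := congrArg (aX g₀⁻¹) h1
      rwa [hXinv1, hXinv1] at this
    rw [h2]
  have hmeq : ∀ s : Γ, MeasurableSet {y | f y = aY s y} := by
    letI := upgradeStandardBorel Y
    exact fun s => hfm.stronglyMeasurable.measurableSet_eq_fun (hYmeas s).stronglyMeasurable
  have horbeq : η (f '' (π₁ '' E)) = η (π₁ '' E) :=
    orbit_image_measure η aY hYmeas hYmp hYone hYmul hTm hmeq hinjf horb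
  have himgeq : f '' (π₁ '' E) = π₂ '' F := by
    rw [Set.image_image]
    rw [hFdef, Set.image_image]
    exact Set.image_congr hfT
  -- conclude
  have key : η B₁ * (μ A₁)⁻¹ * μ E = η B₂ * (μ A₂)⁻¹ * μ E := by
    rw [← hs1, ← horbeq, himgeq, hs2, hμF]
  have key2 : η B₁ * (μ A₁)⁻¹ = η B₂ * (μ A₂)⁻¹ := by
    have := congrArg (· * (μ E)⁻¹) key
    simpa [mul_assoc, ENNReal.mul_inv_cancel hE0 hμEtop] using this
  rw [div_eq_mul_inv, div_eq_mul_inv]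
  exact key2
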